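/- Let f: ℝ^M × ℝ^N → ℝ be C² on a neighborhood of a stable saddle point (x*,y*) (∇f(x*,y*) = 0, ∇_{xx}f(x*,y*) ≻ 0, ∇_{yy}f(x*,y*) ≺ 0). Then there is a radius r > 0 and constant c > 0 such that for all z in the ball B((x*,y*), r), the descent-ascent direction d(z) = (-∇_x f(z), ∇_y f(z)) satisfies ∇f(z)ᵀ∇²f(z)d(z) ≤ -c‖∇f(z)‖². -/

import Mathlib

open scoped RealInnerProductSpace
open InnerProductSpace

lemma quad_lower_bound {F : Type*} [NormedAddCommGroup F] [NormedSpace ℝ F]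
    [FiniteDimensional ℝ F] (q : F → ℝ) (hq : Continuous q)
    (hsc : ∀ (c : ℝ) (u : F), q (c • u) = c ^ 2 * q u)
    (hpos : ∀ u : F, u ≠ 0 → 0 < q u) :
    ∃ μ > 0, ∀ u : F, μ * ‖u‖ ^ 2 ≤ q u := by
  have hq0 : q 0 = 0 := by simpa using hsc 0 0
  rcases subsingleton_or_nontrivial F with hs | hn
  · exact ⟨1, one_pos, fun u => by simp [Subsingleton.elim u 0, hq0]⟩
  · obtain ⟨u₀, hu₀mem, hu₀min⟩ :=
      (isCompact_sphere (0:F) 1).exists_isMinOn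
        (NormedSpace.sphere_nonempty.mpr one_pos.le) hq.continuousOn
    have hu₀norm : ‖u₀‖ = 1 := by simpa using hu₀mem
    have hu₀ne : u₀ ≠ 0 := by intro h; simp [h] at hu₀norm
    refine ⟨q u₀, hpos u₀ hu₀ne, fun u => ?_⟩
    rcases eq_or_ne u 0 with rfl | hu
    · simp [hq0]
    · have hnu : (0:ℝ) < ‖u‖ := norm_pos_iff.mpr hu
      have hmem : ‖u‖⁻¹ • u ∈ Metric.sphere (0:F) 1 := by
        simp [norm_smul, abs_of_pos (inv_pos.mpr hnu), inv_mul_cancel₀ hnu.ne']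
      have hmin := hu₀min hmem
      have heq : q (‖u‖⁻¹ • u) = ‖u‖⁻¹ ^ 2 * q u := hsc _ u
      have h2 : q u₀ ≤ ‖u‖⁻¹ ^ 2 * q u := by simpa [heq] using hmin
      have h3 := mul_le_mul_of_nonneg_left h2 (sq_nonneg ‖u‖)
      calc q u₀ * ‖u‖ ^ 2 = ‖u‖ ^ 2 * q u₀ := by ring
        _ ≤ ‖u‖ ^ 2 * (‖u‖⁻¹ ^ 2 * q u) := h3
        _ = q u := by field_simp

lemma block_bound {n : Type*} [Fintype n] {E : Type*} [NormedAddCommGroup E]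
    [InnerProductSpace ℝ E] (J : EuclideanSpace ℝ n → E)
    (hJsmul : ∀ (c : ℝ) (u : EuclideanSpace ℝ n), J (c • u) = c • J u)
    (hJcont : Continuous J) (T : E →L[ℝ] E)
    (hpos : ∀ u : EuclideanSpace ℝ n, u ≠ 0 → 0 < ⟪J u, T (J u)⟫) :
    ∃ μ > 0, ∀ u : EuclideanSpace ℝ n, μ * ‖u‖ ^ 2 ≤ ⟪J u, T (J u)⟫ := by
  refine quad_lower_bound _ (hJcont.inner (T.continuous.comp hJcont)) ?_ hpos
  intro c u
  rw [hJsmul, real_inner_smul_left, map_smul, real_inner_smul_right]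
  ring

/-- Near a stable saddle point `z* = (x*,y*)` (zero gradient, `∇ₓₓf(z*) ≻ 0`,
`∇_yy f(z*) ≺ 0`) of a function C² near `z*`, there are `r > 0` and `c > 0` such
that for every `z` in the ball of radius `r` the descent-ascent direction
`d(z) = (-∇ₓf(z), ∇_y f(z))` satisfies `∇f(z)ᵀ∇²f(z)d(z) ≤ -c‖∇f(z)‖²`.
The product space `ℝ^M × ℝ^N` is modelled as `EuclideanSpace ℝ (Fin M ⊕ Fin N)`,
with `Sum.inl`-coordinates playing the role of `x` and `Sum.inr` of `y`. -/
theorem stable_saddle_descent_ascent_bound (M N : ℕ)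
    (f : EuclideanSpace ℝ (Fin M ⊕ Fin N) → ℝ)
    (zstar : EuclideanSpace ℝ (Fin M ⊕ Fin N))
    (hf : ContDiffAt ℝ 2 f zstar)
    (emb : ((Fin M ⊕ Fin N) → ℝ) ≃ₗ[ℝ] EuclideanSpace ℝ (Fin M ⊕ Fin N))
    (hemb : emb = (EuclideanSpace.equiv (Fin M ⊕ Fin N) ℝ).symm)
    (hgrad : gradient f zstar = 0)
    (hxx : ∀ u : Fin M → ℝ, u ≠ 0 →
      0 < ⟪emb (Sum.elim u 0), fderiv ℝ (gradient f) zstar (emb (Sum.elim u 0))⟫)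
    (hyy : ∀ v : Fin N → ℝ, v ≠ 0 →
      ⟪emb (Sum.elim 0 v), fderiv ℝ (gradient f) zstar (emb (Sum.elim 0 v))⟫ < 0) :
    ∃ r > 0, ∃ c > 0, ∀ z ∈ Metric.ball zstar r,
      ⟪gradient f z,
          fderiv ℝ (gradient f) z
            (emb (Sum.elim (fun i => -(gradient f z (Sum.inl i)))
              (fun j => gradient f z (Sum.inr j))))⟫ ≤
        -c * ‖gradient f z‖ ^ 2 := by
  classical
  -- coordinates of emb
  have hco : ∀ (w : (Fin M ⊕ Fin N) → ℝ) (i : Fin M ⊕ Fin N), emb w i = w i := by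
    rw [hemb]; intro w i; rfl
  -- smul compatibility for the block injections
  have hJxs : ∀ (c : ℝ) (u : EuclideanSpace ℝ (Fin M)),
      emb (Sum.elim (c • u) (0 : Fin N → ℝ)) = c • emb (Sum.elim u (0 : Fin N → ℝ)) := by
    intro c u
    rw [← map_smul emb]
    congr 1
    funext i
    cases i with
    | inl i => simp
    | inr j => simp
  have hJys : ∀ (c : ℝ) (v : EuclideanSpace ℝ (Fin N)),
      emb (Sum.elim (0 : Fin M → ℝ) (c • v)) = c • emb (Sum.elim (0 : Fin M → ℝ) v) := by
    intro c v
    rw [← map_smul emb]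
    congr 1
    funext i
    cases i with
    | inl i => simp
    | inr j => simp
  have hembc : Continuous emb := emb.toLinearMap.continuous_of_finiteDimensional
  have hJxc : Continuous (fun u : EuclideanSpace ℝ (Fin M) =>
      emb (Sum.elim u (0 : Fin N → ℝ))) := by
    refine hembc.comp ?_
    refine continuous_pi fun i => ?_
    cases i with
    | inl i => exact (EuclideanSpace.proj i).continuous
    | inr j => exact continuous_const
  have hJyc : Continuous (fun v : EuclideanSpace ℝ (Fin N) =>
      emb (Sum.elim (0 : Fin M → ℝ) v)) := by
    refine hembc.comp ?_
    refine continuous_pi fun i => ?_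
    cases i with
    | inl i => exact continuous_const
    | inr j => exact (EuclideanSpace.proj j).continuous
  -- norms of injected vectors
  have hnx : ∀ u : EuclideanSpace ℝ (Fin M),
      ‖emb (Sum.elim u (0 : Fin N → ℝ))‖ = ‖u‖ := by
    intro u
    rw [EuclideanSpace.norm_eq, EuclideanSpace.norm_eq]
    congr 1
    simp [hco, Fintype.sum_sum_type]
  have hny : ∀ v : EuclideanSpace ℝ (Fin N),
      ‖emb (Sum.elim (0 : Fin M → ℝ) v)‖ = ‖v‖ := by
    intro v
    rw [EuclideanSpace.norm_eq, EuclideanSpace.norm_eq]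
    congr 1
    simp [hco, Fintype.sum_sum_type]
  -- orthogonality
  have hortho : ∀ (u : Fin M → ℝ) (v : Fin N → ℝ),
      ⟪emb (Sum.elim u (0 : Fin N → ℝ)), emb (Sum.elim (0 : Fin M → ℝ) v)⟫ = 0 := by
    intro u v
    rw [PiLp.inner_apply]
    simp [hco, Fintype.sum_sum_type]
  -- decomposition
  have hdecomp : ∀ g : EuclideanSpace ℝ (Fin M ⊕ Fin N),
      emb (Sum.elim (fun i => g (Sum.inl i)) (0 : Fin N → ℝ))
        + emb (Sum.elim (0 : Fin M → ℝ) (fun j => g (Sum.inr j))) = g := by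
    intro g
    refine PiLp.ext fun i => ?_
    rw [PiLp.add_apply, hco, hco]
    cases i with
    | inl i => simp
    | inr j => simp
  have hdir : ∀ g : EuclideanSpace ℝ (Fin M ⊕ Fin N),
      emb (Sum.elim (fun i => -(g (Sum.inl i))) (fun j => g (Sum.inr j)))
        = -emb (Sum.elim (fun i => g (Sum.inl i)) (0 : Fin N → ℝ))
          + emb (Sum.elim (0 : Fin M → ℝ) (fun j => g (Sum.inr j))) := by
    intro g
    refine PiLp.ext fun i => ?_
    rw [PiLp.add_apply, PiLp.neg_apply, hco, hco, hco]
    cases i with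
    | inl i => simp
    | inr j => simp
  -- analytic setup
  obtain ⟨s₀, hs₀, hfs₀⟩ := hf.contDiffOn (le_refl 2) (by simp)
  obtain ⟨s, hss₀, hs_open, hzs⟩ := mem_nhds_iff.1 hs₀
  have hfs : ContDiffOn ℝ 2 f s := hfs₀.mono hss₀
  set e : StrongDual ℝ (EuclideanSpace ℝ (Fin M ⊕ Fin N)) →L[ℝ]
      EuclideanSpace ℝ (Fin M ⊕ Fin N) :=
    { toFun := fun φ => (toDual ℝ (EuclideanSpace ℝ (Fin M ⊕ Fin N))).symm φ
      map_add' := fun φ ψ => by simp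
      map_smul' := fun c φ => by simp
      cont := (toDual ℝ (EuclideanSpace ℝ (Fin M ⊕ Fin N))).symm.continuous } with he
  have hgrad_eq : gradient f = ⇑e ∘ fderiv ℝ f := funext fun y => rfl
  have h1 : ContDiffOn ℝ 1 (fderiv ℝ f) s := hfs.fderiv_of_isOpen hs_open (by norm_num)
  have h2 : ContDiffOn ℝ 1 (gradient f) s := by
    rw [hgrad_eq]; exact e.contDiff.comp_contDiffOn h1
  have hHcont : ContinuousOn (fderiv ℝ (gradient f)) s :=
    h2.continuousOn_fderiv_of_isOpen hs_open (le_refl 1)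
  have hHat : ContinuousAt (fderiv ℝ (gradient f)) zstar :=
    hHcont.continuousAt (hs_open.mem_nhds hzs)
  have hkey : ∀ (φ : StrongDual ℝ (EuclideanSpace ℝ (Fin M ⊕ Fin N)))
      (v : EuclideanSpace ℝ (Fin M ⊕ Fin N)),
      ⟪v, e φ⟫ = φ v := by
    intro φ v
    rw [real_inner_comm]
    exact toDual_symm_apply
  have hsymm : ∀ z ∈ s, ∀ v w : EuclideanSpace ℝ (Fin M ⊕ Fin N),
      ⟪v, fderiv ℝ (gradient f) z w⟫ = ⟪w, fderiv ℝ (gradient f) z v⟫ := by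
    intro z hz v w
    have hz2 : ContDiffAt ℝ 2 f z := (hfs z hz).contDiffAt (hs_open.mem_nhds hz)
    have hsym := hz2.isSymmSndFDerivAt (by simp)
    have hdiff : DifferentiableAt ℝ (fderiv ℝ f) z :=
      (hz2.fderiv_right (m := 1) (by norm_num)).differentiableAt one_ne_zero
    have hHz : fderiv ℝ (gradient f) z = e.comp (fderiv ℝ (fderiv ℝ f) z) := by
      rw [hgrad_eq]
      exact (e.hasFDerivAt.comp z hdiff.hasFDerivAt).fderiv
    rw [hHz]
    simp only [ContinuousLinearMap.coe_comp', Function.comp_apply]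
    rw [hkey, hkey]
    exact hsym w v
  -- block coercivity at zstar
  set A : EuclideanSpace ℝ (Fin M ⊕ Fin N) →L[ℝ] EuclideanSpace ℝ (Fin M ⊕ Fin N) :=
    fderiv ℝ (gradient f) zstar with hAdef
  obtain ⟨μx, hμx, hbx⟩ := block_bound
    (fun u : EuclideanSpace ℝ (Fin M) => emb (Sum.elim u (0 : Fin N → ℝ)))
    hJxs hJxc A (fun u hu => hxx u (by simpa using hu))
  obtain ⟨μy, hμy, hby⟩ := block_bound
    (fun v : EuclideanSpace ℝ (Fin N) => emb (Sum.elim (0 : Fin M → ℝ) v))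
    hJys hJyc (-A) (fun v hv => by
      have := hyy v (by simpa using hv)
      simp only [ContinuousLinearMap.neg_apply, inner_neg_right]
      linarith)
  set μ : ℝ := min μx μy with hμdef
  have hμ : 0 < μ := lt_min hμx hμy
  -- neighborhood where the Hessian is close to A
  have hsmall : ∀ᶠ z in nhds zstar, ‖fderiv ℝ (gradient f) z - A‖ < μ / 2 := by
    have hc : ContinuousAt (fun z => ‖fderiv ℝ (gradient f) z - A‖) zstar :=
      (hHat.sub continuousAt_const).norm
    have h0 : ‖fderiv ℝ (gradient f) zstar - A‖ < μ / 2 := by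
      rw [hAdef, sub_self, norm_zero]; positivity
    exact hc.eventually_lt continuousAt_const h0
  have ht : s ∩ {z | ‖fderiv ℝ (gradient f) z - A‖ < μ / 2} ∈ nhds zstar :=
    Filter.inter_mem (hs_open.mem_nhds hzs) hsmall
  obtain ⟨r, hr, hball⟩ := Metric.mem_nhds_iff.1 ht
  refine ⟨r, hr, μ / 2, by positivity, fun z hz => ?_⟩
  obtain ⟨hzs', hznear⟩ := hball hz
  have hznear' : ‖fderiv ℝ (gradient f) z - A‖ ≤ μ / 2 := le_of_lt hznear
  -- perturbation bound
  have hpert : ∀ w : EuclideanSpace ℝ (Fin M ⊕ Fin N),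
      |⟪w, (fderiv ℝ (gradient f) z - A) w⟫| ≤ μ / 2 * ‖w‖ ^ 2 := by
    intro w
    calc |⟪w, (fderiv ℝ (gradient f) z - A) w⟫|
        ≤ ‖w‖ * ‖(fderiv ℝ (gradient f) z - A) w‖ := abs_real_inner_le_norm _ _
      _ ≤ ‖w‖ * (‖fderiv ℝ (gradient f) z - A‖ * ‖w‖) := by
          gcongr
          exact ContinuousLinearMap.le_opNorm _ _
      _ ≤ ‖w‖ * (μ / 2 * ‖w‖) := by gcongr
      _ = μ / 2 * ‖w‖ ^ 2 := by ring
  -- bounds for the two blocks at z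
  have hsplit : ∀ w : EuclideanSpace ℝ (Fin M ⊕ Fin N),
      ⟪w, fderiv ℝ (gradient f) z w⟫ = ⟪w, A w⟫ + ⟪w, (fderiv ℝ (gradient f) z - A) w⟫ := by
    intro w
    rw [ContinuousLinearMap.sub_apply, inner_sub_right]
    ring
  have ha : ∀ u : EuclideanSpace ℝ (Fin M),
      μ / 2 * ‖emb (Sum.elim u (0 : Fin N → ℝ))‖ ^ 2 ≤
        ⟪emb (Sum.elim u (0 : Fin N → ℝ)),
          fderiv ℝ (gradient f) z (emb (Sum.elim u (0 : Fin N → ℝ)))⟫ := by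
    intro u
    have h1 := hbx u
    rw [← hnx u] at h1
    have h2 := abs_le.mp (hpert (emb (Sum.elim u (0 : Fin N → ℝ))))
    rw [hsplit]
    have hmono : μ * ‖emb (Sum.elim u (0 : Fin N → ℝ))‖ ^ 2
        ≤ μx * ‖emb (Sum.elim u (0 : Fin N → ℝ))‖ ^ 2 :=
      mul_le_mul_of_nonneg_right (min_le_left _ _) (sq_nonneg _)
    linarith [h2.1]
  have hb : ∀ v : EuclideanSpace ℝ (Fin N),
      ⟪emb (Sum.elim (0 : Fin M → ℝ) v),
          fderiv ℝ (gradient f) z (emb (Sum.elim (0 : Fin M → ℝ) v))⟫ ≤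
        -(μ / 2) * ‖emb (Sum.elim (0 : Fin M → ℝ) v)‖ ^ 2 := by
    intro v
    have h1 := hby v
    rw [← hny v] at h1
    simp only [ContinuousLinearMap.neg_apply, inner_neg_right] at h1
    have h2 := abs_le.mp (hpert (emb (Sum.elim (0 : Fin M → ℝ) v)))
    rw [hsplit]
    have hmono : μ * ‖emb (Sum.elim (0 : Fin M → ℝ) v)‖ ^ 2
        ≤ μy * ‖emb (Sum.elim (0 : Fin M → ℝ) v)‖ ^ 2 :=
      mul_le_mul_of_nonneg_right (min_le_right _ _) (sq_nonneg _)
    linarith [h2.2]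
  -- final algebraic combination
  rw [hdir (gradient f z)]
  have hga := ha (WithLp.toLp 2 (fun i => gradient f z (Sum.inl i)))
  simp only [WithLp.ofLp_toLp] at hga
  have hgb := hb (WithLp.toLp 2 (fun j => gradient f z (Sum.inr j)))
  simp only [WithLp.ofLp_toLp] at hgb
  set a : EuclideanSpace ℝ (Fin M ⊕ Fin N) :=
    emb (Sum.elim (fun i => gradient f z (Sum.inl i)) (0 : Fin N → ℝ)) with hadef
  set b : EuclideanSpace ℝ (Fin M ⊕ Fin N) :=
    emb (Sum.elim (0 : Fin M → ℝ) (fun j => gradient f z (Sum.inr j))) with hbdef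
  have hgdec : gradient f z = a + b := (hdecomp (gradient f z)).symm
  have hoab : ⟪a, b⟫ = 0 := hortho _ _
  have hgn : ‖gradient f z‖ ^ 2 = ‖a‖ ^ 2 + ‖b‖ ^ 2 := by
    rw [hgdec, norm_add_sq_real, hoab]; ring
  have hexp : ⟪gradient f z, fderiv ℝ (gradient f) z (-a + b)⟫
      = -⟪a, fderiv ℝ (gradient f) z a⟫ + ⟪a, fderiv ℝ (gradient f) z b⟫
        - ⟪b, fderiv ℝ (gradient f) z a⟫ + ⟪b, fderiv ℝ (gradient f) z b⟫ := by
    rw [hgdec, map_add, map_neg]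
    simp only [inner_add_left, inner_add_right, inner_neg_right]
    ring
  have hcross : ⟪a, fderiv ℝ (gradient f) z b⟫ = ⟪b, fderiv ℝ (gradient f) z a⟫ :=
    hsymm z hzs' a b
  rw [hexp, hcross, hgn]
  linarith
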